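/- Let f, g : ℝ^d → ℂ be of the form ε^{−d/4} q((x−x_0)/√ε) e^{−c|x−x_0|²/ε} with q polynomial and c > 0, normalized so that ∫|f|² = ∫|g|² = 1, and denote by f^ε, g^ε their restrictions to (εℤ)^d. Then Σ_{x ∈ (εℤ)^d} conj(f^ε(x)) g^ε(x) = ε^{−d} ( ∫_{ℝ^d} conj(f) g dx + O(√ε) ) as ε → 0. -/

import Mathlib

set_option maxHeartbeats 2000000

open Real MeasureTheory Filter Complex
open scoped Topology ComplexConjugate RealInnerProductSpace
open scoped Function

noncomputable def latticePt (d : ℕ) (ε : ℝ) (z : Fin d → ℤ) : EuclideanSpace ℝ (Fin d) :=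
  (EuclideanSpace.equiv (Fin d) ℝ).symm fun i => ε * z i

/-- Functions with a global derivative, both with polynomial growth. -/
def Nice (d : ℕ) (F : EuclideanSpace ℝ (Fin d) → ℂ) : Prop :=
  ∃ (F' : EuclideanSpace ℝ (Fin d) → (EuclideanSpace ℝ (Fin d) →L[ℝ] ℂ)) (C : ℝ) (N : ℕ),
    0 ≤ C ∧ ∀ y, HasFDerivAt F (F' y) y ∧ ‖F y‖ ≤ C * (1 + ‖y‖)^N ∧ ‖F' y‖ ≤ C * (1 + ‖y‖)^N

lemma nice_const (d : ℕ) (a : ℂ) : Nice d (fun _ => a) := by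
  refine ⟨fun _ => 0, ‖a‖, 0, norm_nonneg _, fun y => ⟨hasFDerivAt_const a y, by simp, by simp⟩⟩

lemma nice_clm (d : ℕ) (L : EuclideanSpace ℝ (Fin d) →L[ℝ] ℂ) : Nice d (fun y => L y) := by
  refine ⟨fun _ => L, ‖L‖ + 1, 1, by positivity, fun y => ⟨L.hasFDerivAt, ?_, ?_⟩⟩
  · have := L.le_opNorm y
    have h1 : (0:ℝ) ≤ ‖y‖ := norm_nonneg _
    have h2 : (0:ℝ) ≤ ‖L‖ := norm_nonneg _
    nlinarith
  · have h1 : (0:ℝ) ≤ ‖y‖ := norm_nonneg _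
    have h2 : (0:ℝ) ≤ ‖L‖ := norm_nonneg _
    nlinarith

lemma nice_add {d : ℕ} {F G : EuclideanSpace ℝ (Fin d) → ℂ} (hF : Nice d F) (hG : Nice d G) :
    Nice d (fun y => F y + G y) := by
  obtain ⟨F', C₁, N₁, hC₁, h₁⟩ := hF
  obtain ⟨G', C₂, N₂, hC₂, h₂⟩ := hG
  refine ⟨fun y => F' y + G' y, C₁ + C₂, max N₁ N₂, by positivity, fun y => ?_⟩
  obtain ⟨hd₁, hv₁, hn₁⟩ := h₁ y
  obtain ⟨hd₂, hv₂, hn₂⟩ := h₂ y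
  have hb : (1:ℝ) ≤ 1 + ‖y‖ := by simp [norm_nonneg]
  have e₁ : (1 + ‖y‖)^N₁ ≤ (1 + ‖y‖)^(max N₁ N₂) := pow_le_pow_right₀ hb (le_max_left _ _)
  have e₂ : (1 + ‖y‖)^N₂ ≤ (1 + ‖y‖)^(max N₁ N₂) := pow_le_pow_right₀ hb (le_max_right _ _)
  have hp : (0:ℝ) ≤ (1 + ‖y‖)^(max N₁ N₂) := by positivity
  refine ⟨hd₁.add hd₂, ?_, ?_⟩
  · calc ‖F y + G y‖ ≤ ‖F y‖ + ‖G y‖ := norm_add_le _ _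
      _ ≤ C₁ * (1 + ‖y‖)^(max N₁ N₂) + C₂ * (1 + ‖y‖)^(max N₁ N₂) := by
          gcongr <;> [exact hv₁.trans (by nlinarith); exact hv₂.trans (by nlinarith)]
      _ = (C₁ + C₂) * (1 + ‖y‖)^(max N₁ N₂) := by ring
  · calc ‖F' y + G' y‖ ≤ ‖F' y‖ + ‖G' y‖ := norm_add_le _ _
      _ ≤ C₁ * (1 + ‖y‖)^(max N₁ N₂) + C₂ * (1 + ‖y‖)^(max N₁ N₂) := by
          gcongr <;> [exact hn₁.trans (by nlinarith); exact hn₂.trans (by nlinarith)]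
      _ = (C₁ + C₂) * (1 + ‖y‖)^(max N₁ N₂) := by ring

lemma nice_mul {d : ℕ} {F G : EuclideanSpace ℝ (Fin d) → ℂ} (hF : Nice d F) (hG : Nice d G) :
    Nice d (fun y => F y * G y) := by
  obtain ⟨F', C₁, N₁, hC₁, h₁⟩ := hF
  obtain ⟨G', C₂, N₂, hC₂, h₂⟩ := hG
  refine ⟨fun y => F y • G' y + G y • F' y, 2 * C₁ * C₂, N₁ + N₂, by positivity, fun y => ?_⟩
  obtain ⟨hd₁, hv₁, hn₁⟩ := h₁ y
  obtain ⟨hd₂, hv₂, hn₂⟩ := h₂ y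
  have hb : (1:ℝ) ≤ 1 + ‖y‖ := by simp [norm_nonneg]
  have hp1 : (0:ℝ) ≤ (1 + ‖y‖)^N₁ := by positivity
  have hp2 : (0:ℝ) ≤ (1 + ‖y‖)^N₂ := by positivity
  refine ⟨hd₁.mul hd₂, ?_, ?_⟩
  · rw [pow_add]
    calc ‖F y * G y‖ = ‖F y‖ * ‖G y‖ := norm_mul _ _
      _ ≤ (C₁ * (1 + ‖y‖)^N₁) * (C₂ * (1 + ‖y‖)^N₂) := by
          exact mul_le_mul hv₁ hv₂ (norm_nonneg _) (by positivity)
      _ ≤ 2 * C₁ * C₂ * ((1 + ‖y‖)^N₁ * (1 + ‖y‖)^N₂) := by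
          nlinarith [mul_nonneg (mul_nonneg hC₁ hC₂) (mul_nonneg hp1 hp2)]
  · rw [pow_add]
    calc ‖F y • G' y + G y • F' y‖ ≤ ‖F y • G' y‖ + ‖G y • F' y‖ := norm_add_le _ _
      _ ≤ ‖F y‖ * ‖G' y‖ + ‖G y‖ * ‖F' y‖ :=
          add_le_add (ContinuousLinearMap.opNorm_smul_le _ _) (ContinuousLinearMap.opNorm_smul_le _ _)
      _ ≤ (C₁ * (1 + ‖y‖)^N₁) * (C₂ * (1 + ‖y‖)^N₂)
            + (C₂ * (1 + ‖y‖)^N₂) * (C₁ * (1 + ‖y‖)^N₁) := by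
          gcongr <;> first
            | exact mul_le_mul hv₁ hn₂ (norm_nonneg _) (by positivity)
            | exact mul_le_mul hv₂ hn₁ (norm_nonneg _) (by positivity)
      _ = 2 * (C₁ * C₂) * ((1 + ‖y‖)^N₁ * (1 + ‖y‖)^N₂) := by ring
      _ ≤ 2 * C₁ * C₂ * ((1 + ‖y‖)^N₁ * (1 + ‖y‖)^N₂) := le_of_eq (by ring)


lemma nice_conj {d : ℕ} {F : EuclideanSpace ℝ (Fin d) → ℂ} (hF : Nice d F) :
    Nice d (fun y => (starRingEnd ℂ) (F y)) := by
  obtain ⟨F', C, N, hC, h⟩ := hF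
  have hcn : ‖(Complex.conjCLE.toContinuousLinearMap : ℂ →L[ℝ] ℂ)‖ ≤ 1 := by
    apply ContinuousLinearMap.opNorm_le_bound _ zero_le_one
    intro z; simp
  refine ⟨fun y => (Complex.conjCLE.toContinuousLinearMap).comp (F' y), C, N, hC, fun y => ?_⟩
  obtain ⟨hd, hv, hn⟩ := h y
  refine ⟨(Complex.conjCLE.toContinuousLinearMap.hasFDerivAt).comp y hd, ?_, ?_⟩
  · simpa using hv
  · refine le_trans (ContinuousLinearMap.opNorm_comp_le _ _) ?_
    calc ‖(Complex.conjCLE.toContinuousLinearMap : ℂ →L[ℝ] ℂ)‖ * ‖F' y‖ ≤ 1 * ‖F' y‖ := by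
          gcongr
      _ = ‖F' y‖ := one_mul _
      _ ≤ _ := hn

lemma nice_poly (d : ℕ) (q : MvPolynomial (Fin d) ℂ) :
    Nice d (fun y => MvPolynomial.eval (fun i => ((y i : ℝ) : ℂ)) q) := by
  induction q using MvPolynomial.induction_on with
  | C a => simpa using nice_const d a
  | add p q hp hq => simpa using nice_add hp hq
  | mul_X p n hp =>
      have hX : Nice d (fun y => ((y n : ℝ) : ℂ)) := by
        have := nice_clm d (Complex.ofRealCLM.comp (EuclideanSpace.proj n))
        simpa using this
      simpa using nice_mul hp hX


lemma gauss_deriv (d : ℕ) (a : ℝ) (ha : 0 < a) :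
    ∃ D : EuclideanSpace ℝ (Fin d) → (EuclideanSpace ℝ (Fin d) →L[ℝ] ℂ),
      ∀ y, HasFDerivAt (fun y : EuclideanSpace ℝ (Fin d) =>
          ((Real.exp (-a * ‖y‖^2) : ℝ) : ℂ)) (D y) y ∧
        ‖D y‖ ≤ 2*a*‖y‖ * Real.exp (-a * ‖y‖^2) := by
  have key : ∀ y : EuclideanSpace ℝ (Fin d),
      ∃ D : EuclideanSpace ℝ (Fin d) →L[ℝ] ℂ,
        HasFDerivAt (fun y : EuclideanSpace ℝ (Fin d) =>
          ((Real.exp (-a * ‖y‖^2) : ℝ) : ℂ)) D y ∧ ‖D‖ ≤ 2*a*‖y‖ * Real.exp (-a * ‖y‖^2) := by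
    intro y
    -- derivative of y ↦ ⟪y, y⟫
    have hinner : HasFDerivAt (fun y : EuclideanSpace ℝ (Fin d) => ⟪y, y⟫)
        ((fderivInnerCLM ℝ (y, y)).comp ((ContinuousLinearMap.id ℝ _).prod
          (ContinuousLinearMap.id ℝ _))) y :=
      (hasFDerivAt_id y).inner ℝ (hasFDerivAt_id y)
    set N : EuclideanSpace ℝ (Fin d) →L[ℝ] ℝ :=
      (fderivInnerCLM ℝ (y, y)).comp ((ContinuousLinearMap.id ℝ _).prod
        (ContinuousLinearMap.id ℝ _)) with hN
    have hNnorm : ‖N‖ ≤ 2 * ‖y‖ := by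
      apply ContinuousLinearMap.opNorm_le_bound _ (by positivity)
      intro v
      have : N v = ⟪y, v⟫ + ⟪v, y⟫ := rfl
      rw [this]
      calc ‖⟪y, v⟫ + ⟪v, y⟫‖ ≤ ‖⟪y, v⟫‖ + ‖⟪v, y⟫‖ := norm_add_le _ _
        _ ≤ ‖y‖ * ‖v‖ + ‖v‖ * ‖y‖ := by
            gcongr
            · rw [Real.norm_eq_abs]; exact abs_real_inner_le_norm y v
            · rw [Real.norm_eq_abs]; exact abs_real_inner_le_norm v y
        _ = 2 * ‖y‖ * ‖v‖ := by ring
    -- y ↦ -a * ‖y‖^2 = -a * ⟪y,y⟫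
    have hnsq : HasFDerivAt (fun y : EuclideanSpace ℝ (Fin d) => -a * ‖y‖^2) ((-a) • N) y := by
      have : (fun y : EuclideanSpace ℝ (Fin d) => -a * ‖y‖^2)
          = fun y : EuclideanSpace ℝ (Fin d) => -a * ⟪y, y⟫ := by
        funext w; rw [real_inner_self_eq_norm_sq]
      rw [this]
      exact hinner.const_mul (-a)
    have hexp : HasFDerivAt (fun y : EuclideanSpace ℝ (Fin d) => Real.exp (-a * ‖y‖^2))
        (Real.exp (-a * ‖y‖^2) • ((-a) • N)) y :=
      (Real.hasDerivAt_exp _).comp_hasFDerivAt y hnsq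
    refine ⟨Complex.ofRealCLM.comp (Real.exp (-a * ‖y‖^2) • ((-a) • N)), 
      Complex.ofRealCLM.hasFDerivAt.comp y hexp, ?_⟩
    refine le_trans (ContinuousLinearMap.opNorm_comp_le _ _) ?_
    have h1 : ‖(Complex.ofRealCLM : ℝ →L[ℝ] ℂ)‖ ≤ 1 := by
      apply ContinuousLinearMap.opNorm_le_bound _ zero_le_one
      intro z; simp
    calc ‖(Complex.ofRealCLM : ℝ →L[ℝ] ℂ)‖ * ‖Real.exp (-a * ‖y‖^2) • ((-a) • N)‖
        ≤ 1 * ‖Real.exp (-a * ‖y‖^2) • ((-a) • N)‖ := by gcongr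
      _ = ‖Real.exp (-a * ‖y‖^2) • ((-a) • N)‖ := one_mul _
      _ ≤ Real.exp (-a * ‖y‖^2) * (a * ‖N‖) := by
          refine le_trans (ContinuousLinearMap.opNorm_smul_le _ _) ?_
          rw [Real.norm_eq_abs, Real.abs_exp]
          gcongr
          refine le_trans (ContinuousLinearMap.opNorm_smul_le _ _) ?_
          rw [Real.norm_eq_abs, abs_neg, abs_of_pos ha]
      _ ≤ Real.exp (-a * ‖y‖^2) * (a * (2 * ‖y‖)) := by
          gcongr
      _ = 2*a*‖y‖ * Real.exp (-a * ‖y‖^2) := by ring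
  choose D hD using key
  exact ⟨D, hD⟩



lemma nice_poly' (d : ℕ) (qf qg : MvPolynomial (Fin d) ℂ) :
    Nice d (fun y => (starRingEnd ℂ) (MvPolynomial.eval (fun i => ((y i : ℝ) : ℂ)) qf) *
      MvPolynomial.eval (fun i => ((y i : ℝ) : ℂ)) qg) :=
  nice_mul (nice_conj (nice_poly d qf)) (nice_poly d qg)

lemma poly_absorb {c : ℝ} (hc : 0 < c) (M : ℕ) (t : ℝ) (ht : 0 ≤ t) :
    (1 + t)^M ≤ Real.exp ((M:ℝ)^2/(4*c)) * Real.exp (c*t^2) := by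
  have h1 : (1 + t) ≤ Real.exp t := by linarith [Real.add_one_le_exp t]
  have h2 : (1 + t)^M ≤ Real.exp t ^ M := pow_le_pow_left₀ (by linarith) h1 M
  have h3 : Real.exp t ^ M = Real.exp ((M:ℝ) * t) := by
    rw [← Real.exp_nat_mul]
  have h4 : (M:ℝ) * t ≤ c * t^2 + (M:ℝ)^2/(4*c) := by
    rw [← sub_nonneg]
    have he : c * t^2 + (M:ℝ)^2/(4*c) - (M:ℝ)*t = (2*c*t - M)^2 / (4*c) := by
      field_simp; ring
    rw [he]; positivity
  calc (1 + t)^M ≤ Real.exp ((M:ℝ) * t) := h3 ▸ h2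
    _ ≤ Real.exp (c*t^2 + (M:ℝ)^2/(4*c)) := Real.exp_le_exp.2 h4
    _ = Real.exp ((M:ℝ)^2/(4*c)) * Real.exp (c*t^2) := by
        rw [← Real.exp_add]; ring_nf

/-- The function `h` and its Gaussian-decay bounds. -/
lemma hfun_bound (d : ℕ) (c : ℝ) (hc : 0 < c) (qf qg : MvPolynomial (Fin d) ℂ) :
    ∃ (h' : EuclideanSpace ℝ (Fin d) → (EuclideanSpace ℝ (Fin d) →L[ℝ] ℂ)) (K : ℝ),
      0 ≤ K ∧ ∀ y,
        HasFDerivAt (fun y : EuclideanSpace ℝ (Fin d) =>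
          (starRingEnd ℂ) (MvPolynomial.eval (fun i => ((y i : ℝ) : ℂ)) qf) *
            MvPolynomial.eval (fun i => ((y i : ℝ) : ℂ)) qg *
            ((Real.exp (-(2*c) * ‖y‖^2) : ℝ) : ℂ)) (h' y) y ∧
        ‖(starRingEnd ℂ) (MvPolynomial.eval (fun i => ((y i : ℝ) : ℂ)) qf) *
            MvPolynomial.eval (fun i => ((y i : ℝ) : ℂ)) qg *
            ((Real.exp (-(2*c) * ‖y‖^2) : ℝ) : ℂ)‖ ≤ K * Real.exp (-c * ‖y‖^2) ∧
        ‖h' y‖ ≤ K * Real.exp (-c * ‖y‖^2) := by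
  obtain ⟨A', C, N, hC, hA⟩ := nice_poly' d qf qg
  obtain ⟨D, hD⟩ := gauss_deriv d (2*c) (by linarith)
  set A : EuclideanSpace ℝ (Fin d) → ℂ := fun y =>
    (starRingEnd ℂ) (MvPolynomial.eval (fun i => ((y i : ℝ) : ℂ)) qf) *
      MvPolynomial.eval (fun i => ((y i : ℝ) : ℂ)) qg with hAdef
  set G : EuclideanSpace ℝ (Fin d) → ℂ := fun y =>
    ((Real.exp (-(2*c) * ‖y‖^2) : ℝ) : ℂ) with hGdef
  refine ⟨fun y => A y • D y + G y • A' y,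
    C * (4*c+1) * Real.exp (((N:ℝ)+1)^2/(4*c)), by positivity, fun y => ?_⟩
  obtain ⟨hdA, hvA, hnA⟩ := hA y
  obtain ⟨hdG, hnG⟩ := hD y
  have hvG : ‖G y‖ = Real.exp (-(2*c) * ‖y‖^2) := by
    show ‖((Real.exp (-(2*c) * ‖y‖^2) : ℝ) : ℂ)‖ = _
    rw [Complex.norm_real, Real.norm_eq_abs, Real.abs_exp]
  have ht : (0:ℝ) ≤ ‖y‖ := norm_nonneg _
  have hexp_pos : (0:ℝ) < Real.exp (-(2*c) * ‖y‖^2) := Real.exp_pos _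
  have habs : (1 + ‖y‖)^(N+1) ≤ Real.exp (((N:ℝ)+1)^2/(4*c)) * Real.exp (c*‖y‖^2) := by
    have := poly_absorb hc (N+1) ‖y‖ ht
    simpa [Nat.cast_add] using this
  have hcomb : Real.exp (c*‖y‖^2) * Real.exp (-(2*c) * ‖y‖^2) = Real.exp (-c * ‖y‖^2) := by
    rw [← Real.exp_add]; ring_nf
  have hmono : (1 + ‖y‖)^N ≤ (1 + ‖y‖)^(N+1) := by
    apply pow_le_pow_right₀ (by linarith) (by omega)
  -- value bound
  have val_bound : ‖A y * G y‖ ≤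
      C * (4*c+1) * Real.exp (((N:ℝ)+1)^2/(4*c)) * Real.exp (-c * ‖y‖^2) := by
    rw [norm_mul, hvG]
    calc ‖A y‖ * Real.exp (-(2*c) * ‖y‖^2)
        ≤ (C * (1 + ‖y‖)^N) * Real.exp (-(2*c) * ‖y‖^2) := by gcongr
      _ ≤ (C * ((1 + ‖y‖)^(N+1))) * Real.exp (-(2*c) * ‖y‖^2) := by gcongr
      _ ≤ (C * (Real.exp (((N:ℝ)+1)^2/(4*c)) * Real.exp (c*‖y‖^2))) *
            Real.exp (-(2*c) * ‖y‖^2) := by gcongr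
      _ = C * Real.exp (((N:ℝ)+1)^2/(4*c)) *
            (Real.exp (c*‖y‖^2) * Real.exp (-(2*c) * ‖y‖^2)) := by ring
      _ = C * Real.exp (((N:ℝ)+1)^2/(4*c)) * Real.exp (-c * ‖y‖^2) := by rw [hcomb]
      _ ≤ C * (4*c+1) * Real.exp (((N:ℝ)+1)^2/(4*c)) * Real.exp (-c * ‖y‖^2) := by
          nlinarith [mul_nonneg (mul_nonneg (mul_nonneg hc.le hC)
              (Real.exp_pos (((N:ℝ)+1)^2/(4*c))).le) (Real.exp_pos (-c * ‖y‖^2)).le]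
  -- derivative bound
  have der_bound : ‖A y • D y + G y • A' y‖ ≤
      C * (4*c+1) * Real.exp (((N:ℝ)+1)^2/(4*c)) * Real.exp (-c * ‖y‖^2) := by
    have e1 : ‖A y • D y + G y • A' y‖ ≤ ‖A y‖ * ‖D y‖ + ‖G y‖ * ‖A' y‖ :=
      le_trans (norm_add_le _ _)
        (add_le_add (ContinuousLinearMap.opNorm_smul_le _ _)
          (ContinuousLinearMap.opNorm_smul_le _ _))
    have e2 : ‖A y‖ * ‖D y‖ + ‖G y‖ * ‖A' y‖ ≤
        (C * (1 + ‖y‖)^N) * (2*(2*c)*‖y‖ * Real.exp (-(2*c) * ‖y‖^2))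
          + Real.exp (-(2*c) * ‖y‖^2) * (C * (1 + ‖y‖)^N) := by
      rw [hvG]
      gcongr
    have e3 : (C * (1 + ‖y‖)^N) * (2*(2*c)*‖y‖ * Real.exp (-(2*c) * ‖y‖^2))
          + Real.exp (-(2*c) * ‖y‖^2) * (C * (1 + ‖y‖)^N)
        ≤ C * (4*c+1) * (1 + ‖y‖)^(N+1) * Real.exp (-(2*c) * ‖y‖^2) := by
      have h1 : (1 + ‖y‖)^(N+1) = (1 + ‖y‖)^N * (1 + ‖y‖) := pow_succ _ _
      rw [h1]
      have hpN : (0:ℝ) ≤ (1 + ‖y‖)^N := by positivity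
      nlinarith [mul_nonneg (mul_nonneg hC hpN) (le_of_lt hexp_pos),
        mul_nonneg (mul_nonneg (mul_nonneg hC hpN) (le_of_lt hexp_pos)) ht]
    have e4 : C * (4*c+1) * (1 + ‖y‖)^(N+1) * Real.exp (-(2*c) * ‖y‖^2)
        ≤ C * (4*c+1) * (Real.exp (((N:ℝ)+1)^2/(4*c)) * Real.exp (c*‖y‖^2)) *
            Real.exp (-(2*c) * ‖y‖^2) := by
      gcongr
    calc ‖A y • D y + G y • A' y‖ ≤ _ := le_trans e1 (le_trans e2 e3)
      _ ≤ _ := e4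
      _ = C * (4*c+1) * Real.exp (((N:ℝ)+1)^2/(4*c)) *
            (Real.exp (c*‖y‖^2) * Real.exp (-(2*c) * ‖y‖^2)) := by ring
      _ = _ := by rw [hcomb]
  exact ⟨hdA.mul hdG, val_bound, der_bound⟩


noncomputable def cubeCorner (d : ℕ) (δ : ℝ) (b : EuclideanSpace ℝ (Fin d)) (z : Fin d → ℤ) :
    EuclideanSpace ℝ (Fin d) :=
  ((EuclideanSpace.equiv (Fin d) ℝ).symm fun i => δ * z i) - b

def cube (d : ℕ) (δ : ℝ) (b : EuclideanSpace ℝ (Fin d)) (z : Fin d → ℤ) :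
    Set (EuclideanSpace ℝ (Fin d)) :=
  (MeasurableEquiv.toLp 2 (Fin d → ℝ)).symm ⁻¹'
    (Set.univ.pi fun i => Set.Ico (δ * z i - b i) (δ * z i - b i + δ))

lemma mem_cube_iff (d : ℕ) (δ : ℝ) (b : EuclideanSpace ℝ (Fin d)) (z : Fin d → ℤ)
    (y : EuclideanSpace ℝ (Fin d)) :
    y ∈ cube d δ b z ↔ ∀ i, δ * z i - b i ≤ y i ∧ y i < δ * z i - b i + δ := by
  simp [cube, Set.mem_pi, MeasurableEquiv.coe_toLp_symm]

-- multi-dim Gaussian integrability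
lemma integrable_gauss (d : ℕ) (a : ℝ) (ha : 0 < a) :
    Integrable (fun y : EuclideanSpace ℝ (Fin d) => Real.exp (-a * ‖y‖^2)) := by
  have h := GaussianFourier.integrable_cexp_neg_mul_sq_norm_add (V := EuclideanSpace ℝ (Fin d))
    (b := (a : ℂ)) (by simpa using ha) 0 0
  have h2 := h.norm
  refine h2.congr (Eventually.of_forall fun y => ?_)
  show ‖cexp _‖ = _
  rw [Complex.norm_exp]
  congr 1
  simp only [Complex.add_re, Complex.neg_re, Complex.mul_re, Complex.ofReal_re,
    Complex.ofReal_im, Complex.zero_re, Complex.zero_im]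
  rw [← Complex.ofReal_pow, Complex.ofReal_re, Complex.ofReal_im]
  ring

lemma norm_sub_corner_le (d : ℕ) (δ : ℝ) (hδ : 0 < δ) (b : EuclideanSpace ℝ (Fin d))
    (z : Fin d → ℤ) (y : EuclideanSpace ℝ (Fin d)) (hy : y ∈ cube d δ b z) :
    ‖y - cubeCorner d δ b z‖ ≤ δ * Real.sqrt d := by
  rw [mem_cube_iff] at hy
  rw [EuclideanSpace.norm_eq]
  have hbound : ∀ i, ‖(y - cubeCorner d δ b z) i‖^2 ≤ δ^2 := by
    intro i
    have h1 : (y - cubeCorner d δ b z) i = y i - (δ * z i - b i) := rfl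
    rw [h1, Real.norm_eq_abs, _root_.sq_abs]
    obtain ⟨hlo, hhi⟩ := hy i
    nlinarith
  calc Real.sqrt (∑ i, ‖(y - cubeCorner d δ b z) i‖^2)
      ≤ Real.sqrt (∑ _i : Fin d, δ^2) := by
        apply Real.sqrt_le_sqrt
        exact Finset.sum_le_sum fun i _ => hbound i
    _ = δ * Real.sqrt d := by
        rw [Finset.sum_const, Finset.card_univ, Fintype.card_fin, nsmul_eq_mul]
        rw [Real.sqrt_mul (by positivity), Real.sqrt_sq hδ.le]
        ring

lemma cube_cover (d : ℕ) (δ : ℝ) (hδ : 0 < δ) (b : EuclideanSpace ℝ (Fin d)) :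
    (⋃ z : Fin d → ℤ, cube d δ b z) = Set.univ := by
  ext y
  simp only [Set.mem_iUnion, Set.mem_univ, iff_true]
  refine ⟨fun i => ⌊(y i + b i)/δ⌋, (mem_cube_iff _ _ _ _ _).2 fun i => ?_⟩
  constructor
  · have h := Int.floor_le ((y i + b i)/δ)
    have := (mul_le_mul_iff_left₀ hδ).2 h
    rw [div_mul_cancel₀ _ hδ.ne'] at this
    linarith [this]
  · have h := Int.lt_floor_add_one ((y i + b i)/δ)
    have := (mul_lt_mul_iff_left₀ hδ).2 h
    rw [div_mul_cancel₀ _ hδ.ne'] at this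
    linarith [this]

lemma cube_disjoint (d : ℕ) (δ : ℝ) (hδ : 0 < δ) (b : EuclideanSpace ℝ (Fin d)) :
    Pairwise (Disjoint on (cube d δ b)) := by
  intro z z' hzz'
  rw [Function.onFun, Set.disjoint_left]
  intro y hy hy'
  apply hzz'
  funext i
  rw [mem_cube_iff] at hy hy'
  have spec : ∀ w : ℤ, δ * w - b i ≤ y i → y i < δ * w - b i + δ → w = ⌊(y i + b i)/δ⌋ := by
    intro w h1 h2
    symm
    rw [Int.floor_eq_iff]
    constructor
    · rw [le_div_iff₀ hδ]; linarith
    · rw [div_lt_iff₀ hδ]; push_cast; linarith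
  rw [spec (z i) (hy i).1 (hy i).2, spec (z' i) (hy' i).1 (hy' i).2]

lemma gauss_shift {c : ℝ} (hc : 0 < c) (d : ℕ) (w u : EuclideanSpace ℝ (Fin d))
    (hwu : ‖w - u‖ ≤ Real.sqrt d) :
    Real.exp (-c * ‖w‖^2) ≤ Real.exp (c * d) * Real.exp (-(c/2) * ‖u‖^2) := by
  rw [← Real.exp_add]
  apply Real.exp_le_exp.2
  have h1 : ‖u‖ ≤ ‖w‖ + Real.sqrt d := by
    calc ‖u‖ ≤ ‖w‖ + ‖u - w‖ := by
          have := norm_add_le w (u - w); simpa using this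
      _ ≤ ‖w‖ + Real.sqrt d := by rw [norm_sub_rev] at hwu; linarith
  have hd : Real.sqrt d ^ 2 = d := Real.sq_sqrt (Nat.cast_nonneg d)
  have hw : (0:ℝ) ≤ ‖w‖ := norm_nonneg _
  have hu : (0:ℝ) ≤ ‖u‖ := norm_nonneg _
  have hsq : ‖u‖^2 ≤ 2*‖w‖^2 + 2*d := by
    nlinarith [mul_self_le_mul_self hu h1, sq_nonneg (‖w‖ - Real.sqrt d),
      Real.sqrt_nonneg (d:ℝ)]
  nlinarith [mul_le_mul_of_nonneg_left hsq (by linarith : (0:ℝ) ≤ c/2)]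

/-- The quantitative Riemann-sum estimate. -/
lemma riemann_sum_est (d : ℕ) (c : ℝ) (hc : 0 < c) (h : EuclideanSpace ℝ (Fin d) → ℂ)
    (h' : EuclideanSpace ℝ (Fin d) → (EuclideanSpace ℝ (Fin d) →L[ℝ] ℂ)) (K : ℝ) (hK : 0 ≤ K)
    (hder : ∀ y, HasFDerivAt h (h' y) y)
    (hval : ∀ y, ‖h y‖ ≤ K * Real.exp (-c * ‖y‖^2))
    (hderb : ∀ y, ‖h' y‖ ≤ K * Real.exp (-c * ‖y‖^2)) :
    ∃ C : ℝ, 0 ≤ C ∧ ∀ δ : ℝ, 0 < δ → δ ≤ 1 → ∀ b,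
      ‖((δ:ℂ)^d * ∑' z : Fin d → ℤ, h (cubeCorner d δ b z)) - ∫ y, h y‖ ≤ C * δ := by
  set g : EuclideanSpace ℝ (Fin d) → ℝ := fun y => Real.exp (-(c/2) * ‖y‖^2) with hgdef
  have hg_int : Integrable g := integrable_gauss d (c/2) (by linarith)
  have hg_nonneg : ∀ y, 0 ≤ g y := fun y => (Real.exp_pos _).le
  set Ig : ℝ := ∫ y, g y with hIgdef
  have hIg : 0 ≤ Ig := integral_nonneg hg_nonneg
  have hcont : Continuous h := by
    rw [continuous_iff_continuousAt]; exact fun y => (hder y).differentiableAt.continuousAt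
  have hh_int : Integrable h := by
    refine Integrable.mono' ((integrable_gauss d c hc).const_mul K)
      hcont.aestronglyMeasurable (Eventually.of_forall fun y => hval y)
  refine ⟨K * Real.exp (c * d) * Real.sqrt d * Ig, by positivity, fun δ hδ hδ1 b => ?_⟩
  set pt : (Fin d → ℤ) → EuclideanSpace ℝ (Fin d) := cubeCorner d δ b with hptdef
  set T : (Fin d → ℤ) → Set (EuclideanSpace ℝ (Fin d)) := cube d δ b with hTdef
  have hTmeas : ∀ z, MeasurableSet (T z) := fun z =>
    (MeasurableEquiv.toLp 2 (Fin d → ℝ)).symm.measurable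
      (MeasurableSet.univ_pi fun i => measurableSet_Ico)
  have hTvol : ∀ z, volume (T z) = ENNReal.ofReal (δ^d) := by
    intro z
    rw [hTdef]
    rw [cube, (EuclideanSpace.volume_preserving_symm_measurableEquiv_toLp (Fin d)).measure_preimage
      ((MeasurableSet.univ_pi fun i => measurableSet_Ico)).nullMeasurableSet]
    rw [volume_pi_pi]
    simp [Real.volume_Ico, ENNReal.ofReal_pow hδ.le]
  have hTvolR : ∀ z, (volume (T z)).toReal = δ^d := by
    intro z; rw [hTvol z, ENNReal.toReal_ofReal (by positivity)]
  have hTfin : ∀ z, volume (T z) < ⊤ := by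
    intro z; rw [hTvol z]; exact ENNReal.ofReal_lt_top
  have hcover : (⋃ z, T z) = Set.univ := cube_cover d δ hδ b
  have hdisj : Pairwise (Disjoint on T) := cube_disjoint d δ hδ b
  -- sums of integrals over cubes
  have Sh : HasSum (fun z => ∫ y in T z, h y) (∫ y, h y) := by
    have := hasSum_integral_iUnion hTmeas hdisj (hh_int.integrableOn (s := ⋃ z, T z))
    rwa [hcover, Measure.restrict_univ] at this
  have Sg : HasSum (fun z => ∫ y in T z, g y) Ig := by
    have := hasSum_integral_iUnion hTmeas hdisj (hg_int.integrableOn (s := ⋃ z, T z))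
    rwa [hcover, Measure.restrict_univ] at this
  -- pointwise Lipschitz-type bound on each cube
  have hlip : ∀ z, ∀ y ∈ T z, ‖h (pt z) - h y‖ ≤
      (K * Real.exp (c * d) * (δ * Real.sqrt d)) * g y := by
    intro z y hy
    have hrad : ‖y - pt z‖ ≤ δ * Real.sqrt d := norm_sub_corner_le d δ hδ b z y hy
    have hball : ∀ w ∈ Metric.closedBall y (δ * Real.sqrt d),
        ‖fderiv ℝ h w‖ ≤ K * Real.exp (c * d) * g y := by
      intro w hw
      rw [(hder w).fderiv]
      refine le_trans (hderb w) ?_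
      rw [mul_assoc]
      gcongr
      apply gauss_shift hc
      rw [Metric.mem_closedBall, dist_eq_norm] at hw
      calc ‖w - y‖ ≤ δ * Real.sqrt d := hw
        _ ≤ 1 * Real.sqrt d := by gcongr
        _ = Real.sqrt d := one_mul _
    have hmem1 : pt z ∈ Metric.closedBall y (δ * Real.sqrt d) := by
      rw [Metric.mem_closedBall, dist_eq_norm, norm_sub_rev]
      exact hrad
    have hmem2 : y ∈ Metric.closedBall y (δ * Real.sqrt d) :=
      Metric.mem_closedBall_self (by positivity)
    have := (convex_closedBall y (δ * Real.sqrt d)).norm_image_sub_le_of_norm_fderiv_le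
      (fun w _ => (hder w).differentiableAt) hball hmem2 hmem1
    calc ‖h (pt z) - h y‖ ≤ (K * Real.exp (c * d) * g y) * ‖pt z - y‖ := this
      _ ≤ (K * Real.exp (c * d) * g y) * (δ * Real.sqrt d) := by
          rw [norm_sub_rev]
          gcongr
      _ = (K * Real.exp (c * d) * (δ * Real.sqrt d)) * g y := by ring
  -- value bound on each cube
  have hvalcube : ∀ z, ∀ y ∈ T z, ‖h (pt z)‖ ≤ K * Real.exp (c*d) * g y := by
    intro z y hy
    refine le_trans (hval (pt z)) ?_
    rw [mul_assoc]
    gcongr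
    apply gauss_shift hc
    calc ‖pt z - y‖ = ‖y - pt z‖ := norm_sub_rev _ _
      _ ≤ δ * Real.sqrt d := norm_sub_corner_le d δ hδ b z y hy
      _ ≤ 1 * Real.sqrt d := by gcongr
      _ = Real.sqrt d := one_mul _
  have hIcube_g : ∀ z, IntegrableOn g (T z) := fun z => hg_int.integrableOn
  have hIcube_h : ∀ z, IntegrableOn h (T z) := fun z => hh_int.integrableOn
  set r : ℝ := K * Real.exp (c*d) * (δ * Real.sqrt d) with hrdef
  have hr : 0 ≤ r := by positivity
  -- per-cube comparison
  have key : ∀ z, ‖((δ^d : ℝ) : ℂ) * h (pt z) - ∫ y in T z, h y‖ ≤ r * ∫ y in T z, g y := by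
    intro z
    have h0 : ((δ^d : ℝ) : ℂ) * h (pt z) = ∫ _y in T z, h (pt z) := by
      rw [setIntegral_const, measureReal_def, hTvolR z, Complex.real_smul]
    have hci : IntegrableOn (fun _y => h (pt z)) (T z) :=
      integrableOn_const (hTfin z).ne
    rw [h0, ← integral_sub hci (hIcube_h z)]
    refine le_trans (norm_integral_le_integral_norm _) ?_
    have step : ∫ y in T z, ‖h (pt z) - h y‖ ≤ ∫ y in T z, r * g y := by
      refine setIntegral_mono_on ((hci.sub (hIcube_h z)).norm) ((hIcube_g z).const_mul r)
        (hTmeas z) (fun y hy => hlip z y hy)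
    refine le_trans step (le_of_eq ?_)
    exact integral_const_mul r g
  -- summability of the corner values
  have hsummable : Summable (fun z => h (pt z)) := by
    have hδd : (0:ℝ) < δ^d := by positivity
    apply Summable.of_norm_bounded
      (g := fun z => (δ^d)⁻¹ * ((K * Real.exp (c*d)) * ∫ y in T z, g y))
      (((Sg.summable.mul_left (K * Real.exp (c*d))).mul_left ((δ^d)⁻¹)).congr
        (fun z => by ring))
    intro z
    have hb : ‖h (pt z)‖ * δ^d ≤ (K * Real.exp (c*d)) * ∫ y in T z, g y := by
      have h1 : ∫ _y in T z, ‖h (pt z)‖ = (δ^d : ℝ) • ‖h (pt z)‖ := by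
        rw [setIntegral_const, measureReal_def, hTvolR z]
      have h2 : ∫ _y in T z, ‖h (pt z)‖ ≤ ∫ y in T z, (K * Real.exp (c*d)) * g y :=
        setIntegral_mono_on (integrableOn_const (hTfin z).ne)
          ((hIcube_g z).const_mul _) (hTmeas z) (fun y hy => hvalcube z y hy)
      rw [h1, smul_eq_mul, mul_comm] at h2
      rw [integral_const_mul] at h2
      exact h2
    rw [← mul_le_mul_iff_left₀ hδd, inv_mul_eq_div, div_mul_eq_mul_div, mul_div_assoc,
      div_self hδd.ne', mul_one]
    exact hb
  have hsum2 : HasSum (fun z => ((δ^d : ℝ) : ℂ) * h (pt z) - ∫ y in T z, h y)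
      (((δ^d : ℝ) : ℂ) * (∑' z, h (pt z)) - ∫ y, h y) :=
    (hsummable.hasSum.mul_left _).sub Sh
  have hcast : ((δ:ℂ))^d = ((δ^d : ℝ) : ℂ) := by push_cast; ring
  rw [hcast, ← hsum2.tsum_eq]
  have hns : Summable (fun z => ‖((δ^d : ℝ) : ℂ) * h (pt z) - ∫ y in T z, h y‖) :=
    Summable.of_nonneg_of_le (fun z => norm_nonneg _) key (Sg.summable.mul_left r)
  refine le_trans (norm_tsum_le_tsum_norm hns) ?_
  refine le_trans (Summable.tsum_le_tsum key hns (Sg.summable.mul_left r)) ?_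
  rw [(Sg.mul_left r).tsum_eq]
  rw [hrdef]
  ring_nf
  exact le_refl _


noncomputable def hker (d : ℕ) (c : ℝ) (qf qg : MvPolynomial (Fin d) ℂ) :
    EuclideanSpace ℝ (Fin d) → ℂ := fun y =>
  (starRingEnd ℂ) (MvPolynomial.eval (fun i => ((y i : ℝ) : ℂ)) qf) *
    MvPolynomial.eval (fun i => ((y i : ℝ) : ℂ)) qg *
    ((Real.exp (-(2*c) * ‖y‖^2) : ℝ) : ℂ)


lemma riemann_for_hker (d : ℕ) (c : ℝ) (hc : 0 < c) (qf qg : MvPolynomial (Fin d) ℂ) :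
    ∃ C : ℝ, 0 ≤ C ∧ ∀ δ : ℝ, 0 < δ → δ ≤ 1 → ∀ b,
      ‖((δ:ℂ)^d * ∑' z : Fin d → ℤ, hker d c qf qg (cubeCorner d δ b z))
        - ∫ y, hker d c qf qg y‖ ≤ C * δ := by
  obtain ⟨h', K, hK, hbounds⟩ := hfun_bound d c hc qf qg
  exact riemann_sum_est d c hc (hker d c qf qg) h' K hK
    (fun y => (hbounds y).1) (fun y => (hbounds y).2.1) (fun y => (hbounds y).2.2)

lemma pointwise_id (d : ℕ) (x₀ : EuclideanSpace ℝ (Fin d)) (c : ℝ) (hc : 0 < c)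
    (qf qg : MvPolynomial (Fin d) ℂ)
    (f g : ℝ → EuclideanSpace ℝ (Fin d) → ℂ)
    (hf : ∀ ε : ℝ, 0 < ε → ∀ x, f ε x =
        (ε ^ (-(d : ℝ) / 4) : ℝ) *
          MvPolynomial.eval (fun i => (((x i - x₀ i) / Real.sqrt ε : ℝ) : ℂ)) qf *
          Real.exp (-c * ‖x - x₀‖ ^ 2 / ε))
    (hg : ∀ ε : ℝ, 0 < ε → ∀ x, g ε x =
        (ε ^ (-(d : ℝ) / 4) : ℝ) *
          MvPolynomial.eval (fun i => (((x i - x₀ i) / Real.sqrt ε : ℝ) : ℂ)) qg *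
          Real.exp (-c * ‖x - x₀‖ ^ 2 / ε))
    (ε : ℝ) (hε : 0 < ε) (x : EuclideanSpace ℝ (Fin d)) :
    conj (f ε x) * g ε x =
      ((ε ^ (-(d:ℝ)/2) : ℝ) : ℂ) * hker d c qf qg ((Real.sqrt ε)⁻¹ • (x - x₀)) := by
  have hδ : 0 < Real.sqrt ε := Real.sqrt_pos.2 hε
  rw [hf ε hε x, hg ε hε x]
  have harg : (fun i => (((x i - x₀ i) / Real.sqrt ε : ℝ) : ℂ))
      = fun i => ((((Real.sqrt ε)⁻¹ • (x - x₀)) i : ℝ) : ℂ) := by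
    funext i
    congr 1
    show (x i - x₀ i) / Real.sqrt ε = (Real.sqrt ε)⁻¹ * (x i - x₀ i)
    ring
  have hnorm : ‖(Real.sqrt ε)⁻¹ • (x - x₀)‖^2 = ‖x - x₀‖^2 / ε := by
    rw [norm_smul, Real.norm_eq_abs, abs_of_pos (inv_pos.2 hδ), mul_pow]
    rw [← Real.sq_sqrt hε.le]
    field_simp
    rw [Real.sqrt_sq hδ.le]
  have e1 : (ε ^ (-(d:ℝ)/4) : ℝ) * (ε ^ (-(d:ℝ)/4) : ℝ) = (ε ^ (-(d:ℝ)/2) : ℝ) := by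
    rw [← Real.rpow_add hε]; congr 1; ring
  have e2 : Real.exp (-c * ‖x - x₀‖^2 / ε) * Real.exp (-c * ‖x - x₀‖^2 / ε)
      = Real.exp (-(2*c) * ‖(Real.sqrt ε)⁻¹ • (x - x₀)‖^2) := by
    rw [← Real.exp_add, hnorm]; ring_nf
  rw [hker, harg]
  rw [map_mul, map_mul, Complex.conj_ofReal, Complex.conj_ofReal]
  rw [← e1, ← e2]
  push_cast
  ring

lemma lattice_id (d : ℕ) (x₀ : EuclideanSpace ℝ (Fin d)) (ε : ℝ) (hε : 0 < ε) (z : Fin d → ℤ) :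
    (Real.sqrt ε)⁻¹ • (latticePt d ε z - x₀)
      = cubeCorner d (Real.sqrt ε) ((Real.sqrt ε)⁻¹ • x₀) z := by
  have hδ : 0 < Real.sqrt ε := Real.sqrt_pos.2 hε
  ext i
  show (Real.sqrt ε)⁻¹ * (ε * z i - x₀ i) = Real.sqrt ε * z i - (Real.sqrt ε)⁻¹ * x₀ i
  have h2 : ε = Real.sqrt ε * Real.sqrt ε := (Real.mul_self_sqrt hε.le).symm
  field_simp
  linear_combination (z i : ℝ) * h2

lemma integral_id' (d : ℕ) (c : ℝ) (x₀ : EuclideanSpace ℝ (Fin d)) (qf qg : MvPolynomial (Fin d) ℂ)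
    (ε : ℝ) (hε : 0 < ε) :
    ∫ x, hker d c qf qg ((Real.sqrt ε)⁻¹ • (x - x₀))
      = ((Real.sqrt ε ^ d : ℝ) : ℂ) * ∫ y, hker d c qf qg y := by
  have hδ : 0 < Real.sqrt ε := Real.sqrt_pos.2 hε
  rw [integral_sub_right_eq_self (fun t => hker d c qf qg ((Real.sqrt ε)⁻¹ • t)) x₀]
  rw [MeasureTheory.Measure.integral_comp_smul volume (hker d c qf qg) (Real.sqrt ε)⁻¹]
  rw [finrank_euclideanSpace_fin]
  rw [Complex.real_smul]
  congr 2
  rw [abs_of_pos (by positivity)]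
  rw [inv_pow, inv_inv]

/-- Comparison of lattice and continuum inner products for ε-scaled Gaussian-type
functions: `⟨f^ε, g^ε⟩_{ℓ²((εℤ)^d)} = ε^{−d} ( ⟨f,g⟩_{L²} + O(√ε) )` as `ε → 0⁺`. -/
theorem lattice_continuum_inner_product
    (d : ℕ) (x₀ : EuclideanSpace ℝ (Fin d)) (c : ℝ) (hc : 0 < c)
    (qf qg : MvPolynomial (Fin d) ℂ)
    (f g : ℝ → EuclideanSpace ℝ (Fin d) → ℂ)
    (hf : ∀ ε : ℝ, 0 < ε → ∀ x, f ε x =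
        (ε ^ (-(d : ℝ) / 4) : ℝ) *
          MvPolynomial.eval (fun i => (((x i - x₀ i) / Real.sqrt ε : ℝ) : ℂ)) qf *
          Real.exp (-c * ‖x - x₀‖ ^ 2 / ε))
    (hg : ∀ ε : ℝ, 0 < ε → ∀ x, g ε x =
        (ε ^ (-(d : ℝ) / 4) : ℝ) *
          MvPolynomial.eval (fun i => (((x i - x₀ i) / Real.sqrt ε : ℝ) : ℂ)) qg *
          Real.exp (-c * ‖x - x₀‖ ^ 2 / ε))
    (hfnorm : ∀ ε : ℝ, 0 < ε → ε ≤ 1 → ∫ x, ‖f ε x‖ ^ 2 = 1)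
    (hgnorm : ∀ ε : ℝ, 0 < ε → ε ≤ 1 → ∫ x, ‖g ε x‖ ^ 2 = 1) :
    (fun ε : ℝ =>
        (∑' z : Fin d → ℤ, conj (f ε (latticePt d ε z)) * g ε (latticePt d ε z))
          - (ε ^ (-(d : ℝ)) : ℝ) * ∫ x, conj (f ε x) * g ε x)
      =O[𝓝[>] (0 : ℝ)] fun ε => ε ^ ((1 : ℝ) / 2 - d) := by
  obtain ⟨C, hC, hmain⟩ := riemann_for_hker d c hc qf qg
  rw [Asymptotics.isBigO_iff]
  refine ⟨C, ?_⟩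
  filter_upwards [Ioo_mem_nhdsGT_of_mem
    (by norm_num : (0:ℝ) ∈ Set.Ico (0:ℝ) 1)] with ε hεmem
  obtain ⟨hε, hε1⟩ := hεmem
  have hδ : 0 < Real.sqrt ε := Real.sqrt_pos.2 hε
  have hδ1 : Real.sqrt ε ≤ 1 := by
    rw [show (1:ℝ) = Real.sqrt 1 by simp]
    exact Real.sqrt_le_sqrt hε1.le
  set δ : ℝ := Real.sqrt ε with hδdef
  set b : EuclideanSpace ℝ (Fin d) := δ⁻¹ • x₀ with hbdef
  set A : ℂ := ∑' z : Fin d → ℤ, hker d c qf qg (cubeCorner d δ b z) with hAdef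
  set I : ℂ := ∫ y, hker d c qf qg y with hIdef
  -- rewrite the lattice sum
  have hterm : ∀ z : Fin d → ℤ, conj (f ε (latticePt d ε z)) * g ε (latticePt d ε z)
      = ((ε ^ (-(d:ℝ)/2) : ℝ) : ℂ) * hker d c qf qg (cubeCorner d δ b z) := by
    intro z
    rw [pointwise_id d x₀ c hc qf qg f g hf hg ε hε (latticePt d ε z)]
    rw [lattice_id d x₀ ε hε z]
  have hsum : (∑' z : Fin d → ℤ, conj (f ε (latticePt d ε z)) * g ε (latticePt d ε z))
      = ((ε ^ (-(d:ℝ)/2) : ℝ) : ℂ) * A := by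
    rw [tsum_congr hterm, tsum_mul_left]
  -- rewrite the integral
  have hint : (∫ x, conj (f ε x) * g ε x)
      = ((ε ^ (-(d:ℝ)/2) : ℝ) : ℂ) * (((δ^d : ℝ) : ℂ) * I) := by
    have h1 : (fun x => conj (f ε x) * g ε x)
        = fun x => ((ε ^ (-(d:ℝ)/2) : ℝ) : ℂ) * hker d c qf qg (δ⁻¹ • (x - x₀)) :=
      funext fun x => pointwise_id d x₀ c hc qf qg f g hf hg ε hε x
    rw [h1, integral_const_mul, integral_id' d c x₀ qf qg ε hε]
  rw [hsum, hint]
  -- algebraic consolidation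
  have hre0 : δ^d = ε ^ ((d:ℝ)/2) := by
    rw [hδdef, Real.sqrt_eq_rpow, ← Real.rpow_natCast (ε ^ ((1:ℝ)/2)) d,
      ← Real.rpow_mul hε.le]
    congr 1; ring
  have R1 : (ε ^ (-(d:ℝ)/2) : ℝ) = (ε ^ (-(d:ℝ)) : ℝ) * δ^d := by
    rw [hre0, ← Real.rpow_add hε]; congr 1; ring
  have R3 : (ε ^ (-(d:ℝ)/2) : ℝ) * δ^d = 1 := by
    rw [hre0, ← Real.rpow_add hε, show -(d:ℝ)/2 + (d:ℝ)/2 = 0 by ring, Real.rpow_zero]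
  have c1 : ((ε ^ (-(d:ℝ)/2) : ℝ) : ℂ) = ((ε ^ (-(d:ℝ)) : ℝ) : ℂ) * ((δ^d : ℝ) : ℂ) := by
    rw [← Complex.ofReal_mul, R1]
  have c5 : ((ε ^ (-(d:ℝ)) : ℝ) : ℂ) * ((δ^d : ℝ) : ℂ) * ((δ^d : ℝ) : ℂ) = 1 := by
    rw [← c1, ← Complex.ofReal_mul, R3, Complex.ofReal_one]
  have expand : ((ε ^ (-(d:ℝ)/2) : ℝ) : ℂ) * A
      - ((ε ^ (-(d:ℝ)) : ℝ) : ℂ) * (((ε ^ (-(d:ℝ)/2) : ℝ) : ℂ) * (((δ^d : ℝ) : ℂ) * I))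
      = ((ε ^ (-(d:ℝ)) : ℝ) : ℂ) * (((δ^d : ℝ) : ℂ) * A - I) := by
    rw [c1]
    linear_combination (-(((ε ^ (-(d:ℝ)) : ℝ) : ℂ) * I)) * c5
  rw [expand]
  -- final norm estimate
  have hcast : ((δ^d : ℝ) : ℂ) = ((δ:ℂ))^d := by push_cast; ring
  have hbound : ‖((δ^d : ℝ) : ℂ) * A - I‖ ≤ C * δ := by
    rw [hcast]
    exact hmain δ hδ hδ1 b
  have hupos : (0:ℝ) < ε ^ (-(d:ℝ)) := Real.rpow_pos_of_pos hε _
  have R4 : (ε ^ (-(d:ℝ)) : ℝ) * δ = ε ^ ((1:ℝ)/2 - d) := by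
    rw [hδdef, Real.sqrt_eq_rpow, ← Real.rpow_add hε]
    congr 1; ring
  calc ‖((ε ^ (-(d:ℝ)) : ℝ) : ℂ) * (((δ^d : ℝ) : ℂ) * A - I)‖
      = (ε ^ (-(d:ℝ)) : ℝ) * ‖((δ^d : ℝ) : ℂ) * A - I‖ := by
        rw [norm_mul, Complex.norm_real, Real.norm_eq_abs, abs_of_pos hupos]
    _ ≤ (ε ^ (-(d:ℝ)) : ℝ) * (C * δ) := by gcongr
    _ = C * ((ε ^ (-(d:ℝ)) : ℝ) * δ) := by ring
    _ = C * ε ^ ((1:ℝ)/2 - d) := by rw [R4]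
    _ = C * ‖ε ^ ((1:ℝ)/2 - d)‖ := by
        rw [Real.norm_eq_abs, abs_of_pos (Real.rpow_pos_of_pos hε _)]
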